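/- Let h : ℝ × ℝ^d → ℝ be continuously differentiable with bounded partial derivatives. Then the Stein solution f_h admits the alternative representation f_h(x,y) = −∫₀¹ (2√t)⁻¹ · E[∂_x h(√t·x + √(1−t)·Z, y)] dt for all x ∈ ℝ and y ∈ ℝ^d. -/

import Mathlib

open MeasureTheory ProbabilityTheory Real
open scoped NNReal ENNReal

lemma integral_gaussianReal_eq (v : ℝ≥0) (hv : v ≠ 0) (f : ℝ → ℝ) :
    ∫ z, f z ∂(gaussianReal 0 v) = ∫ z, gaussianPDFReal 0 v z * f z := by
  rw [gaussianReal_of_var_ne_zero _ hv, gaussianPDF_def]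
  rw [show (fun x => ENNReal.ofReal (gaussianPDFReal 0 v x))
      = fun x => ((gaussianPDFReal 0 v x).toNNReal : ℝ≥0∞) from rfl]
  rw [integral_withDensity_eq_integral_smul
    ((measurable_gaussianPDFReal 0 v).real_toNNReal) f]
  congr 1
  ext z
  rw [NNReal.smul_def, Real.coe_toNNReal _ (gaussianPDFReal_nonneg 0 v z)]
  simp [smul_eq_mul]

lemma integrable_quad_gauss {b : ℝ} (hb : 0 < b) (A B : ℝ) :
    Integrable (fun z : ℝ => (A + B * z ^ 2) * Real.exp (-b * z ^ 2)) := by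
  have h2 : Integrable (fun z : ℝ => z ^ 2 * Real.exp (-b * z ^ 2)) := by
    have := integrable_rpow_mul_exp_neg_mul_sq hb (s := 2) (by norm_num)
    convert this using 2 with z
    rw [← Real.rpow_natCast z 2]
    norm_num
  simpa [add_mul, mul_assoc, Pi.add_def] using
    (((integrable_exp_neg_mul_sq hb).const_mul A).add (h2.const_mul B))

lemma integrable_of_quad_bound {f : ℝ → ℝ} {b A B : ℝ} (hb : 0 < b)
    (hf : Continuous f)
    (hbd : ∀ z, |f z| ≤ (A + B * z ^ 2) * Real.exp (-b * z ^ 2)) :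
    Integrable f :=
  (integrable_quad_gauss hb A B).mono' hf.aestronglyMeasurable
    (Filter.Eventually.of_forall fun z => by
      rw [Real.norm_eq_abs]
      exact hbd z)

lemma ibp_core (σ c b : ℝ) (hσ2 : 0 < σ ^ 2) (hc : 0 ≤ c) (hb : 0 < b)
    (hbσ : b = (2 * σ ^ 2)⁻¹) (g g' : ℝ → ℝ)
    (hg : ∀ z, HasDerivAt g (g' z) z) (hg'c : Continuous g')
    (C : ℝ) (hC : ∀ z, |g' z| ≤ C) :
    ∫ z, c * Real.exp (-b * z ^ 2) * (z * g z)
      = σ ^ 2 * ∫ z, c * Real.exp (-b * z ^ 2) * g' z := by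
  have hC0 : 0 ≤ C := le_trans (abs_nonneg _) (hC 0)
  have hgc : Continuous g := Differentiable.continuous (fun z => (hg z).differentiableAt)
  have hgrow : ∀ z, |g z| ≤ |g 0| + C * |z| := by
    intro z
    have key : ‖g z - g 0‖ ≤ C * ‖z - 0‖ :=
      Convex.norm_image_sub_le_of_norm_hasDerivWithin_le
        (fun x _ => (hg x).hasDerivWithinAt)
        (fun x _ => by simpa [Real.norm_eq_abs] using hC x)
        convex_univ (Set.mem_univ 0) (Set.mem_univ z)
    rw [Real.norm_eq_abs, Real.norm_eq_abs, sub_zero] at key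
    calc |g z| = |g 0 + (g z - g 0)| := by ring_nf
      _ ≤ |g 0| + |g z - g 0| := abs_add_le _ _
      _ ≤ |g 0| + C * |z| := by linarith
  have habs : ∀ z : ℝ, |z| ≤ 1 + z ^ 2 := by
    intro z
    nlinarith [sq_nonneg (|z| - 1), sq_abs z, abs_nonneg z]
  have hz2 : ∀ z : ℝ, |z| * |z| = z ^ 2 := by
    intro z; rw [← sq_abs z]; ring
  have epos : ∀ z : ℝ, 0 < Real.exp (-b * z ^ 2) := fun z => Real.exp_pos _
  have hgg : ∀ z : ℝ, |g z| * |z| ≤ |g 0| + (|g 0| + C) * z ^ 2 := by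
    intro z
    calc |g z| * |z| ≤ (|g 0| + C * |z|) * |z| :=
          mul_le_mul_of_nonneg_right (hgrow z) (abs_nonneg z)
      _ = |g 0| * |z| + C * z ^ 2 := by rw [add_mul, mul_assoc, hz2]
      _ ≤ |g 0| * (1 + z ^ 2) + C * z ^ 2 :=
          add_le_add_left (mul_le_mul_of_nonneg_left (habs z) (abs_nonneg _)) _
      _ = |g 0| + (|g 0| + C) * z ^ 2 := by ring
  have I1 : Integrable (fun z => g z * (z * (c * Real.exp (-b * z ^ 2)))) := by
    apply integrable_of_quad_bound (A := c * |g 0|) (B := c * (|g 0| + C)) hb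
    · exact hgc.mul (continuous_id.mul (continuous_const.mul
        (Continuous.rexp (by continuity))))
    · intro z
      have h1 : |g z * (z * (c * Real.exp (-b * z ^ 2)))|
          = |g z| * |z| * c * Real.exp (-b * z ^ 2) := by
        rw [abs_mul, abs_mul, abs_mul, abs_of_nonneg hc, abs_of_pos (epos z)]
        ring
      rw [h1]
      have h2 : |g z| * |z| * c ≤ c * |g 0| + c * (|g 0| + C) * z ^ 2 := by
        have := mul_le_mul_of_nonneg_right (hgg z) hc
        nlinarith [this]
      exact mul_le_mul_of_nonneg_right h2 (epos z).le
  have I2 : Integrable (fun z => g' z * (-σ ^ 2 * (c * Real.exp (-b * z ^ 2)))) := by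
    apply integrable_of_quad_bound (A := C * (σ ^ 2 * c)) (B := 0) hb
    · exact hg'c.mul (continuous_const.mul (continuous_const.mul
        (Continuous.rexp (by continuity))))
    · intro z
      have h1 : |g' z * (-σ ^ 2 * (c * Real.exp (-b * z ^ 2)))|
          = |g' z| * (σ ^ 2 * c) * Real.exp (-b * z ^ 2) := by
        rw [abs_mul, abs_mul, abs_mul, abs_neg, abs_of_pos hσ2,
          abs_of_nonneg hc, abs_of_pos (epos z)]
        ring
      rw [h1]
      have h2 : |g' z| * (σ ^ 2 * c) ≤ C * (σ ^ 2 * c) + 0 * z ^ 2 := by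
        have := mul_le_mul_of_nonneg_right (hC z) (mul_nonneg hσ2.le hc)
        nlinarith [this]
      exact mul_le_mul_of_nonneg_right h2 (epos z).le
  have I3 : Integrable (fun z => g z * (-σ ^ 2 * (c * Real.exp (-b * z ^ 2)))) := by
    apply integrable_of_quad_bound (A := σ ^ 2 * c * (|g 0| + C)) (B := σ ^ 2 * c * (|g 0| + C)) hb
    · exact hgc.mul (continuous_const.mul (continuous_const.mul
        (Continuous.rexp (by continuity))))
    · intro z
      have h1 : |g z * (-σ ^ 2 * (c * Real.exp (-b * z ^ 2)))|
          = |g z| * (σ ^ 2 * c) * Real.exp (-b * z ^ 2) := by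
        rw [abs_mul, abs_mul, abs_mul, abs_neg, abs_of_pos hσ2,
          abs_of_nonneg hc, abs_of_pos (epos z)]
        ring
      rw [h1]
      have h2 : |g z| * (σ ^ 2 * c)
          ≤ σ ^ 2 * c * (|g 0| + C) + σ ^ 2 * c * (|g 0| + C) * z ^ 2 := by
        have hb1 : |g z| ≤ (|g 0| + C) + (|g 0| + C) * z ^ 2 := by
          calc |g z| ≤ |g 0| + C * |z| := hgrow z
            _ ≤ |g 0| + C * (1 + z ^ 2) :=
              add_le_add_right (mul_le_mul_of_nonneg_left (habs z) hC0) _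
            _ ≤ (|g 0| + C) + (|g 0| + C) * z ^ 2 := by
                nlinarith [abs_nonneg (g 0), sq_nonneg z]
        have := mul_le_mul_of_nonneg_right hb1 (mul_nonneg hσ2.le hc)
        nlinarith [this]
      exact mul_le_mul_of_nonneg_right h2 (epos z).le
  have hv' : ∀ z, HasDerivAt (fun z => -σ ^ 2 * (c * Real.exp (-b * z ^ 2)))
      (z * (c * Real.exp (-b * z ^ 2))) z := by
    intro z
    have h1 : HasDerivAt (fun z : ℝ => -b * z ^ 2) (-b * (2 * z)) z := by
      simpa [mul_comm] using ((hasDerivAt_pow 2 z).const_mul (-b))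
    have h2 := (h1.exp.const_mul c).const_mul (-σ ^ 2)
    refine h2.congr_deriv ?_
    rw [hbσ]
    field_simp
    have hσ0 : σ ≠ 0 := by rintro rfl; norm_num at hσ2
    field_simp
  have ibp : ∫ z, g z * (z * (c * Real.exp (-b * z ^ 2)))
      = -∫ z, g' z * (-σ ^ 2 * (c * Real.exp (-b * z ^ 2))) :=
    MeasureTheory.integral_mul_deriv_eq_deriv_mul_of_integrable (fun z _ => hg z) (fun z _ => hv' z) I1 I2 I3
  calc ∫ z, c * Real.exp (-b * z ^ 2) * (z * g z)
      = ∫ z, g z * (z * (c * Real.exp (-b * z ^ 2))) := by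
        congr 1; funext z; ring
    _ = -∫ z, g' z * (-σ ^ 2 * (c * Real.exp (-b * z ^ 2))) := ibp
    _ = ∫ z, σ ^ 2 * (c * Real.exp (-b * z ^ 2) * g' z) := by
        rw [← integral_neg]
        congr 1; funext z; ring
    _ = σ ^ 2 * ∫ z, c * Real.exp (-b * z ^ 2) * g' z := by
        rw [integral_const_mul]

lemma gauss_ibp (σ : ℝ) (hσ : 0 < σ) (g g' : ℝ → ℝ)
    (hg : ∀ z, HasDerivAt g (g' z) z) (hg'c : Continuous g')
    (C : ℝ) (hC : ∀ z, |g' z| ≤ C) :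
    ∫ z, z * g z ∂(gaussianReal 0 ⟨σ ^ 2, sq_nonneg σ⟩)
      = σ ^ 2 * ∫ z, g' z ∂(gaussianReal 0 ⟨σ ^ 2, sq_nonneg σ⟩) := by
  have hσ2 : (0:ℝ) < σ ^ 2 := by positivity
  have hv : (⟨σ ^ 2, sq_nonneg σ⟩ : ℝ≥0) ≠ 0 :=
    fun hcon => hσ2.ne' (congrArg NNReal.toReal hcon)
  have hφ : ∀ z, gaussianPDFReal 0 (⟨σ ^ 2, sq_nonneg σ⟩ : ℝ≥0) z
      = (Real.sqrt (2 * π * σ ^ 2))⁻¹ * Real.exp (-(2 * σ ^ 2)⁻¹ * z ^ 2) := by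
    intro z
    have hco : ((⟨σ ^ 2, sq_nonneg σ⟩ : ℝ≥0) : ℝ) = σ ^ 2 := rfl
    simp only [gaussianPDFReal, hco, sub_zero]
    congr 1
    field_simp
    rfl
  rw [integral_gaussianReal_eq _ hv, integral_gaussianReal_eq _ hv]
  simp_rw [hφ]
  exact ibp_core σ _ _ hσ2 (by positivity) (by positivity) rfl g g' hg hg'c C hC



open MeasureTheory ProbabilityTheory

/-- The Stein solution `f_h` associated to `h : ℝ × ℝ^d → ℝ`:
`f_h(x,y) = −(1/σ²) ∫₀¹ (2√(t(1−t)))⁻¹ ⬝ E[Z ⬝ h(√t x + √(1−t) Z, y)] dt`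
where `Z ~ N(0, σ²)`. -/
noncomputable def steinSol {d : ℕ} (σ : ℝ)
    (h : ℝ × EuclideanSpace ℝ (Fin d) → ℝ)
    (x : ℝ) (y : EuclideanSpace ℝ (Fin d)) : ℝ :=
  -(1 / σ ^ 2) * ∫ t in (0:ℝ)..1, (2 * Real.sqrt (t * (1 - t)))⁻¹ *
    ∫ z, z * h (Real.sqrt t * x + Real.sqrt (1 - t) * z, y)
      ∂(gaussianReal 0 ⟨σ ^ 2, sq_nonneg σ⟩)

/-- The Stein solution admits the alternative representation
`f_h(x,y) = −∫₀¹ (2√t)⁻¹ ⬝ E[∂_x h(√t x + √(1−t) Z, y)] dt`. -/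
theorem stmt4 {d : ℕ} (hd : 1 ≤ d) (σ : ℝ) (hσ : 0 < σ)
    (h : ℝ × EuclideanSpace ℝ (Fin d) → ℝ)
    (hh : ContDiff ℝ 1 h)
    (hhB : ∃ C : ℝ, ∀ p, ‖fderiv ℝ h p‖ ≤ C) :
    ∀ (x : ℝ) (y : EuclideanSpace ℝ (Fin d)),
      steinSol σ h x y
        = -∫ t in (0:ℝ)..1, (2 * Real.sqrt t)⁻¹ *
            ∫ z, deriv (fun s => h (s, y)) (Real.sqrt t * x + Real.sqrt (1 - t) * z)
              ∂(gaussianReal 0 ⟨σ ^ 2, sq_nonneg σ⟩) := by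
  obtain ⟨C, hCb⟩ := hhB
  intro x y
  have hσ2 : (0:ℝ) < σ ^ 2 := by positivity
  set H : ℝ → ℝ := fun s => h (s, y) with hHdef
  have hHC : ContDiff ℝ 1 H := hh.comp (contDiff_id.prodMk contDiff_const)
  have hHdiff : Differentiable ℝ H := hHC.differentiable one_ne_zero
  have hH'cont : Continuous (deriv H) := hHC.continuous_deriv le_rfl
  have hH'bd : ∀ s, |deriv H s| ≤ C := by
    intro s
    have h1 : HasFDerivAt (fun s : ℝ => (s, y))
        ((ContinuousLinearMap.id ℝ ℝ).prod 0) s :=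
      (hasFDerivAt_id s).prodMk (hasFDerivAt_const y s)
    have h2 := ((hh.differentiable one_ne_zero) (s, y)).hasFDerivAt.comp s h1
    have h3 : deriv H s = (fderiv ℝ h (s, y)) (1, 0) := by
      have h2' : HasDerivAt H
          (((fderiv ℝ h (s, y)).comp ((ContinuousLinearMap.id ℝ ℝ).prod 0)) 1) s :=
        h2.hasDerivAt
      rw [h2'.deriv]
      simp
    have hn : ‖((1:ℝ), (0:EuclideanSpace ℝ (Fin d)))‖ = 1 := by
      simp [Prod.norm_def]
    rw [← Real.norm_eq_abs, h3]
    calc ‖(fderiv ℝ h (s, y)) (1, 0)‖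
        ≤ ‖fderiv ℝ h (s, y)‖ * ‖((1:ℝ), (0:EuclideanSpace ℝ (Fin d)))‖ :=
          ContinuousLinearMap.le_opNorm _ _
      _ = ‖fderiv ℝ h (s, y)‖ := by rw [hn, mul_one]
      _ ≤ C := hCb _
  have key : ∫ t in (0:ℝ)..1, (1 / σ ^ 2) * ((2 * Real.sqrt (t * (1 - t)))⁻¹ *
        ∫ z, z * H (Real.sqrt t * x + Real.sqrt (1 - t) * z)
          ∂(gaussianReal 0 ⟨σ ^ 2, sq_nonneg σ⟩))
      = ∫ t in (0:ℝ)..1, (2 * Real.sqrt t)⁻¹ *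
        ∫ z, deriv H (Real.sqrt t * x + Real.sqrt (1 - t) * z)
          ∂(gaussianReal 0 ⟨σ ^ 2, sq_nonneg σ⟩) := by
    apply intervalIntegral.integral_congr_ae
    have h1 : ∀ᵐ t : ℝ, t ≠ 1 := by
      rw [ae_iff]
      have : {a : ℝ | ¬a ≠ 1} = {1} := by ext a; simp
      rw [this]
      exact measure_singleton 1
    filter_upwards [h1] with t ht1 htmem
    rw [Set.uIoc_of_le zero_le_one] at htmem
    obtain ⟨ht0, htle⟩ := htmem
    have ht1' : t < 1 := lt_of_le_of_ne htle ht1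
    have hb0 : (0:ℝ) < 1 - t := by linarith
    have hsb : 0 < Real.sqrt (1 - t) := Real.sqrt_pos.2 hb0
    have hst : 0 < Real.sqrt t := Real.sqrt_pos.2 ht0
    have hgd : ∀ z, HasDerivAt
        (fun z => H (Real.sqrt t * x + Real.sqrt (1 - t) * z))
        (deriv H (Real.sqrt t * x + Real.sqrt (1 - t) * z) * Real.sqrt (1 - t)) z := by
      intro z
      have hi : HasDerivAt (fun z : ℝ => Real.sqrt t * x + Real.sqrt (1 - t) * z)
          (Real.sqrt (1 - t)) z := by
        simpa using ((hasDerivAt_id z).const_mul (Real.sqrt (1 - t))).const_add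
          (Real.sqrt t * x)
      exact (hHdiff _).hasDerivAt.comp z hi
    have hg'c : Continuous (fun z =>
        deriv H (Real.sqrt t * x + Real.sqrt (1 - t) * z) * Real.sqrt (1 - t)) :=
      (hH'cont.comp (by continuity)).mul continuous_const
    have hCg : ∀ z, |deriv H (Real.sqrt t * x + Real.sqrt (1 - t) * z) * Real.sqrt (1 - t)|
        ≤ C * Real.sqrt (1 - t) := by
      intro z
      rw [abs_mul, abs_of_pos hsb]
      exact mul_le_mul_of_nonneg_right (hH'bd _) hsb.le
    have ibp := gauss_ibp σ hσ _ _ hgd hg'c (C * Real.sqrt (1 - t)) hCg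
    have ibp' : (∫ z, z * H (Real.sqrt t * x + Real.sqrt (1 - t) * z)
          ∂(gaussianReal 0 ⟨σ ^ 2, sq_nonneg σ⟩))
        = σ ^ 2 * ∫ z, deriv H (Real.sqrt t * x + Real.sqrt (1 - t) * z) * Real.sqrt (1 - t)
          ∂(gaussianReal 0 ⟨σ ^ 2, sq_nonneg σ⟩) := ibp
    rw [ibp', integral_mul_const]
    rw [Real.sqrt_mul ht0.le]
    field_simp
  unfold steinSol
  rw [intervalIntegral.integral_const_mul] at key
  rw [← key]
  ring
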